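/- The two Cantor series representations are related by: ∑_{n=1}^∞ (-1)^{n+1}(1+ε_n)/(d₁⋯d_n) = ∑_{n=1}^∞ δ_n/(d₁⋯d_n), where δ_n = ε_n for odd n and δ_n = d_n − 1 − ε_n for even n. -/

import Mathlib

/-- ∑_{n≥1} (-1)^{n+1}(1+ε_n)/(d₁⋯d_n) = ∑_{n≥1} δ_n/(d₁⋯d_n) where
δ_n = ε_n for odd n and δ_n = d_n − 1 − ε_n for even n. -/
theorem nega_eq_positive_cantor (d : ℕ → ℕ) (hd : ∀ n, 1 ≤ n → 2 ≤ d n)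
    (ε : ℕ → ℕ) (hε : ∀ n, 1 ≤ n → ε n < d n) :
    ∑' n : ℕ, (-1 : ℝ) ^ (n + 2) * (1 + (ε (n + 1) : ℝ)) /
        ∏ j ∈ Finset.Icc 1 (n + 1), (d j : ℝ) =
    ∑' n : ℕ, (((if Odd (n + 1) then ε (n + 1) else d (n + 1) - 1 - ε (n + 1)) : ℕ) : ℝ) /
        ∏ j ∈ Finset.Icc 1 (n + 1), (d j : ℝ) := by
  set P : ℕ → ℝ := fun n => ∏ j ∈ Finset.Icc 1 n, (d j : ℝ) with hPdef
  have hPsucc : ∀ n : ℕ, P (n + 1) = P n * d (n + 1) := by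
    intro n
    simp [hPdef, Finset.prod_Icc_succ_top (Nat.le_add_left 1 n)]
  have hd2 : ∀ n : ℕ, (2 : ℝ) ≤ d (n + 1) := by
    intro n; exact_mod_cast hd (n + 1) (by omega)
  have hPpos : ∀ n, 0 < P n := by
    intro n
    induction n with
    | zero => simp [hPdef]
    | succ k ih =>
      rw [hPsucc]
      exact mul_pos ih (lt_of_lt_of_le two_pos (hd2 k))
  have hPge : ∀ n : ℕ, (2 : ℝ) ^ n ≤ P n := by
    intro n
    induction n with
    | zero => simp [hPdef]
    | succ k ih =>
      rw [hPsucc, pow_succ]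
      exact mul_le_mul ih (hd2 k) (by norm_num) (le_of_lt (hPpos k))
  have key : ∀ (a : ℝ) (n : ℕ), 0 ≤ a → a ≤ d (n + 1) → a / P (n + 1) ≤ (1 / 2) ^ n := by
    intro a n ha hle
    have h1 : a / P (n + 1) ≤ (d (n + 1) : ℝ) / P (n + 1) := by
      gcongr
    have hdne : (d (n + 1) : ℝ) ≠ 0 := ne_of_gt (lt_of_lt_of_le two_pos (hd2 n))
    have hPne : P n ≠ 0 := ne_of_gt (hPpos n)
    have h2 : (d (n + 1) : ℝ) / P (n + 1) = 1 / P n := by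
      rw [hPsucc]
      field_simp
    have h3 : 1 / P n ≤ 1 / (2 : ℝ) ^ n :=
      one_div_le_one_div_of_le (by positivity) (hPge n)
    calc a / P (n + 1) ≤ 1 / P n := by rw [← h2]; exact h1
      _ ≤ 1 / (2:ℝ) ^ n := h3
      _ = (1 / 2 : ℝ) ^ n := by rw [div_pow, one_pow]
  set f : ℕ → ℝ := fun n => (-1 : ℝ) ^ (n + 2) * (1 + (ε (n + 1) : ℝ)) / P (n + 1) with hfdef
  set g : ℕ → ℝ := fun n =>
      (((if Odd (n + 1) then ε (n + 1) else d (n + 1) - 1 - ε (n + 1)) : ℕ) : ℝ) / P (n + 1)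
    with hgdef
  have hεd : ∀ n : ℕ, ε (n + 1) < d (n + 1) := fun n => hε (n + 1) (by omega)
  have hsumgeo : Summable (fun n : ℕ => (1 / 2 : ℝ) ^ n) :=
    summable_geometric_of_lt_one (by norm_num) (by norm_num)
  have hf : Summable f := by
    apply Summable.of_norm_bounded hsumgeo
    intro n
    have h1 : ‖f n‖ = (1 + (ε (n + 1) : ℝ)) / P (n + 1) := by
      rw [hfdef]
      simp only [norm_div, norm_mul, norm_pow, norm_neg, norm_one, one_pow, one_mul]
      rw [Real.norm_of_nonneg (by positivity), Real.norm_of_nonneg (le_of_lt (hPpos (n + 1)))]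
    rw [h1]
    apply key _ n (by positivity)
    have h2 : ((ε (n + 1) + 1 : ℕ) : ℝ) ≤ d (n + 1) := by exact_mod_cast hεd n
    push_cast at h2
    linarith
  have hg : Summable g := by
    apply Summable.of_norm_bounded hsumgeo
    intro n
    have h0 : (0:ℝ) ≤ g n := by
      rw [hgdef]
      positivity
    rw [Real.norm_of_nonneg h0]
    rw [hgdef]
    apply key _ n (by positivity)
    have h1 : (if Odd (n + 1) then ε (n + 1) else d (n + 1) - 1 - ε (n + 1)) ≤ d (n + 1) := by
      have := hεd n
      split <;> omega
    exact_mod_cast h1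
  set h : ℕ → ℝ := fun n => f n - g n with hhdef
  have hh : Summable h := hf.sub hg
  suffices hzero : ∑' n, h n = 0 by
    have hts : ∑' n, (f n - g n) = ∑' n, f n - ∑' n, g n := Summable.tsum_sub hf hg
    have heq : ∑' n, f n - ∑' n, g n = 0 := by rw [← hts]; exact hzero
    exact sub_eq_zero.mp heq
  -- compute h at even and odd indices
  have heven : ∀ k : ℕ, h (2 * k) = 1 / P (2 * k + 1) := by
    intro k
    have hparity : Odd (2 * k + 1) := ⟨k, by ring⟩
    have hsign : (-1 : ℝ) ^ (2 * k + 2) = 1 := by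
      have : Even (2 * k + 2) := ⟨k + 1, by ring⟩
      exact this.neg_one_pow
    simp only [hhdef, hfdef, hgdef, if_pos hparity]
    rw [hsign]
    rw [div_sub_div_same]
    ring_nf
  have hodd : ∀ k : ℕ, h (2 * k + 1) = -(1 / P (2 * k + 1)) := by
    intro k
    have hparity : ¬ Odd (2 * k + 1 + 1) := by
      simp [Nat.odd_iff, Nat.add_mod, Nat.mul_mod]
    have hsign : (-1 : ℝ) ^ (2 * k + 1 + 2) = -1 := by
      have : Odd (2 * k + 1 + 2) := ⟨k + 1, by ring⟩
      exact this.neg_one_pow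
    have hcast : ((d (2 * k + 2) - 1 - ε (2 * k + 2) : ℕ) : ℝ)
        = (d (2 * k + 2) : ℝ) - 1 - ε (2 * k + 2) := by
      have := hε (2 * k + 2) (by omega)
      have h1 : d (2 * k + 2) - 1 - ε (2 * k + 2) = d (2 * k + 2) - (1 + ε (2 * k + 2)) := by
        omega
      rw [h1, Nat.cast_sub (by omega)]
      push_cast; ring
    simp only [hhdef, hfdef, hgdef, if_neg hparity]
    rw [hsign]
    have hPstep : P (2 * k + 1 + 1) = P (2 * k + 1) * d (2 * k + 2) := hPsucc (2 * k + 1)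
    have hdpos : (0:ℝ) < d (2 * k + 2) := lt_of_lt_of_le two_pos (hd2 (2 * k + 1))
    have hPp : (0:ℝ) < P (2 * k + 1) := hPpos _
    rw [hcast, hPstep]
    field_simp
    ring
  have hhe : Summable (fun k => h (2 * k)) :=
    hh.comp_injective (fun a b hab => by omega)
  have hho : Summable (fun k => h (2 * k + 1)) :=
    hh.comp_injective (fun a b hab => by omega)
  rw [← tsum_even_add_odd hhe hho]
  have : (fun k => h (2 * k + 1)) = fun k => -(h (2 * k)) := by
    funext k; rw [hodd k, heven k]
  rw [this, tsum_neg]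
  ring
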